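/- Let Φ = R S_{N²} with S_{N²} = S_{n²} ⊗ S_{δ²} a STOne matrix and R a block-diagonal row selector where each δ²×δ² block R_i has r_i ≥ 1 nonzero diagonal entries. Then the least-squares solution of the preview equation min_u ‖R S_{N²} P u − b‖² with P = I_{n²} ⊗ 1_{δ²} is u = S_{n²} b̂, where b̂_i is the average of the measured entries of b in block i. -/

import Mathlib

open Matrix Kronecker

noncomputable def S4 : Matrix (Fin 4) (Fin 4) ℝ :=
  Matrix.of fun i j => if i = j then -1/2 else 1/2

/-- The STOne matrix `S_{4^k}`, the `k`-fold Kronecker power of `S4`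
(with `S_{4^{k+1}} = S4 ⊗ S_{4^k}` and base case `S_{4^1} = S4`). -/
noncomputable def STOne : (k : ℕ) → Matrix (Fin (4^k)) (Fin (4^k)) ℝ
  | 0 => 1
  | k + 1 =>
    Matrix.reindex (finProdFinEquiv.trans (finCongr (by ring)))
      (finProdFinEquiv.trans (finCongr (by ring))) (S4 ⊗ₖ STOne k)

lemma S4_mul_S4 : S4 * S4 = 1 := by
  ext i j
  fin_cases i <;> fin_cases j <;>
    simp [S4, Matrix.mul_apply, Fin.sum_univ_four, Matrix.one_apply] <;> norm_num

lemma S4_rowsum (i : Fin 4) : ∑ j, S4 i j = 1 := by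
  fin_cases i <;> simp [S4, Fin.sum_univ_four] <;> norm_num

lemma STOne_mul_self : ∀ k, STOne k * STOne k = 1
  | 0 => by simp [STOne]
  | k + 1 => by
    rw [STOne, Matrix.reindex_apply, Matrix.submatrix_mul_equiv,
      ← Matrix.mul_kronecker_mul, S4_mul_S4, STOne_mul_self k,
      Matrix.one_kronecker_one, Matrix.submatrix_one_equiv]

lemma STOne_rowsum : ∀ k, ∀ i, ∑ j, STOne k i j = 1
  | 0, i => by
    have : i = 0 := by omega
    simp [STOne, this, Matrix.one_apply]
  | k + 1, i => by
    rw [STOne]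
    simp only [Matrix.reindex_apply, Matrix.submatrix_apply]
    rw [← Equiv.sum_comp (finProdFinEquiv.trans (finCongr (by ring : 4*4^k = 4^(k+1))))]
    simp only [Equiv.symm_apply_apply]
    rw [Fintype.sum_prod_type]
    simp only [Matrix.kroneckerMap_apply]
    rw [← Finset.sum_mul_sum]
    rw [S4_rowsum, STOne_rowsum k, mul_one]

lemma block_id {α : Type*} (s : Finset α) (hs : s.Nonempty) (g : α → ℝ) (v m : ℝ)
    (hm : m = (∑ γ ∈ s, g γ) / s.card) :
    ∑ γ ∈ s, (v - g γ)^2 = (∑ γ ∈ s, (m - g γ)^2) + s.card * (v - m)^2 := by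
  have hc : (s.card : ℝ) ≠ 0 := by
    exact_mod_cast Finset.card_ne_zero_of_mem hs.choose_spec
  have hsum : ∑ γ ∈ s, (m - g γ) = 0 := by
    rw [Finset.sum_sub_distrib, Finset.sum_const, nsmul_eq_mul, hm]
    field_simp
    ring
  have expand : ∀ γ ∈ s, (v - g γ)^2 = (m - g γ)^2 + (2*(v-m))*(m - g γ) + (v-m)^2 :=
    fun γ _ => by ring
  rw [Finset.sum_congr rfl expand, Finset.sum_add_distrib, Finset.sum_add_distrib,
    ← Finset.mul_sum, hsum, mul_zero, add_zero, Finset.sum_const, nsmul_eq_mul]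
/-- Least-squares preview theorem: when each block `i` has a nonempty set `K i`
of selected rows, the least-squares solution of `min_u ‖R S_{N²} P u − b‖²`
is `u = S_{n²} b̂` where `b̂ i` is the average of the measured entries in block `i`. -/
theorem STOne_preview_least_squares (a d : ℕ) (ha : 1 ≤ a) (hd : 1 ≤ d)
    (K : Fin (4^a) → Finset (Fin (4^d))) (hK : ∀ i, (K i).Nonempty)
    (R : Matrix (Fin (4^a) × Fin (4^d)) (Fin (4^a) × Fin (4^d)) ℝ)
    (hR : R = Matrix.of fun p q => if p = q ∧ p.2 ∈ K p.1 then 1 else 0)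
    (P : Matrix (Fin (4^a) × Fin (4^d)) (Fin (4^a)) ℝ)
    (hP : P = Matrix.of fun p j => if p.1 = j then 1 else 0)
    (b : Fin (4^a) × Fin (4^d) → ℝ)
    (hb : ∀ p : Fin (4^a) × Fin (4^d), p.2 ∉ K p.1 → b p = 0)
    (bhat : Fin (4^a) → ℝ)
    (hbhat : ∀ i, bhat i = (∑ γ ∈ K i, b (i, γ)) / (K i).card)
    (f : (Fin (4^a) → ℝ) → ℝ)
    (hf : ∀ u, f u = ∑ p : Fin (4^a) × Fin (4^d),
      ((R * (STOne a ⊗ₖ STOne d) * P).mulVec u p - b p)^2)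
    (ustar : Fin (4^a) → ℝ) (hustar : ustar = (STOne a).mulVec bhat) :
    (∀ u, f ustar ≤ f u) ∧ (∀ u, f u = f ustar → u = ustar) := by
  -- entries of (STOne a ⊗ₖ STOne d) * P
  have hXP : ∀ (q : Fin (4^a) × Fin (4^d)) (j : Fin (4^a)),
      ((STOne a ⊗ₖ STOne d) * P) q j = STOne a q.1 j := by
    intro q j
    rw [Matrix.mul_apply, Fintype.sum_prod_type, Finset.sum_comm]
    simp only [hP, Matrix.of_apply, Matrix.kroneckerMap_apply, mul_ite, mul_one, mul_zero]
    simp only [Finset.sum_ite_eq', Finset.mem_univ, if_true]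
    rw [← Finset.mul_sum, STOne_rowsum, mul_one]
  -- entries of the full matrix
  have hM : ∀ (p : Fin (4^a) × Fin (4^d)) (j : Fin (4^a)),
      (R * (STOne a ⊗ₖ STOne d) * P) p j
        = if p.2 ∈ K p.1 then STOne a p.1 j else 0 := by
    intro p j
    rw [Matrix.mul_assoc, Matrix.mul_apply]
    simp only [hR, Matrix.of_apply, ite_and, ite_mul, one_mul, zero_mul]
    rw [Finset.sum_ite_eq]
    simp [hXP]
  have key : ∀ u, f u = ∑ i, ∑ γ ∈ K i,
      ((STOne a).mulVec u i - b (i, γ))^2 := by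
    intro u
    rw [hf, Fintype.sum_prod_type]
    refine Finset.sum_congr rfl fun i _ => ?_
    have : ∀ γ : Fin (4^d),
        ((R * (STOne a ⊗ₖ STOne d) * P).mulVec u (i, γ) - b (i, γ))^2
          = if γ ∈ K i then ((STOne a).mulVec u i - b (i, γ))^2 else 0 := by
      intro γ
      by_cases hγ : γ ∈ K i
      · simp only [hγ, if_true, Matrix.mulVec, dotProduct]
        congr 1
        refine congrArg (· - b (i,γ)) (Finset.sum_congr rfl fun j _ => ?_)
        rw [hM (i,γ) j]
        simp [hγ]
      · simp only [hγ, if_false, Matrix.mulVec, dotProduct]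
        have hb0 : b (i, γ) = 0 := hb (i, γ) hγ
        have : ∀ j, (R * (STOne a ⊗ₖ STOne d) * P) (i, γ) j * u j = 0 := by
          intro j; rw [hM (i,γ) j]; simp [hγ]
        simp [Finset.sum_congr rfl fun j _ => this j, hb0]
    rw [Finset.sum_congr rfl fun γ _ => this γ, Finset.sum_ite_mem,
      Finset.univ_inter]
  -- decomposition
  have hSS : (STOne a).mulVec ustar = bhat := by
    rw [hustar, Matrix.mulVec_mulVec, STOne_mul_self, Matrix.one_mulVec]
  have decomp : ∀ u, f u = f ustar
      + ∑ i, ((K i).card : ℝ) * ((STOne a).mulVec u i - bhat i)^2 := by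
    intro u
    rw [key u, key ustar, ← Finset.sum_add_distrib]
    refine Finset.sum_congr rfl fun i _ => ?_
    rw [hSS]
    exact block_id (K i) (hK i) (fun γ => b (i, γ)) _ _ (hbhat i)
  have hnn : ∀ u, 0 ≤ ∑ i, ((K i).card : ℝ) * ((STOne a).mulVec u i - bhat i)^2 :=
    fun u => Finset.sum_nonneg fun i _ => mul_nonneg (Nat.cast_nonneg _) (sq_nonneg _)
  constructor
  · intro u
    rw [decomp u]
    linarith [hnn u]
  · intro u hu
    rw [decomp u] at hu
    have hz : ∑ i, ((K i).card : ℝ) * ((STOne a).mulVec u i - bhat i)^2 = 0 := by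
      linarith
    have heach := (Finset.sum_eq_zero_iff_of_nonneg
      (fun i _ => mul_nonneg (Nat.cast_nonneg _) (sq_nonneg _) : ∀ i ∈ Finset.univ,
        (0:ℝ) ≤ ((K i).card : ℝ) * ((STOne a).mulVec u i - bhat i)^2)).mp hz
    have hveq : (STOne a).mulVec u = bhat := by
      funext i
      have h := heach i (Finset.mem_univ i)
      have hc : ((K i).card : ℝ) ≠ 0 := by
        exact_mod_cast Finset.card_ne_zero_of_mem (hK i).choose_spec
      have := mul_eq_zero.mp h
      rcases this with h' | h'
      · exact absurd h' hc
      · have := pow_eq_zero_iff (n := 2) (by norm_num) |>.mp h'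
        linarith [this]
    have : (STOne a).mulVec ((STOne a).mulVec u) = (STOne a).mulVec bhat := by
      rw [hveq]
    rwa [Matrix.mulVec_mulVec, STOne_mul_self, Matrix.one_mulVec, ← hustar] at this
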